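/- Let M be an m×q real matrix of rank r and K = MM'. If M̂_n is a sequence of random m×q matrices with √n·vec(M̂_n − M) converging in distribution (hence √n(M̂_n − M) = O_P(1)), then each eigenvalue λ̂_i of M̂_n M̂_n' for i = r+1,...,m (descending order) satisfies λ̂_i = O_P(1/n). -/

import Mathlib

open Matrix MeasureTheory Filter

open RealInnerProductSpace in

lemma eig_null_bound {m q : ℕ} (M A : Matrix (Fin m) (Fin q) ℝ) {r : ℕ} (hr : M.rank = r)
    (lam : Fin m → ℝ) (hmono : Antitone lam) (σ : Equiv.Perm (Fin m))
    (hσ : lam = (Matrix.isHermitian_mul_conjTranspose_self A).eigenvalues ∘ σ)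
    (i : Fin m) (hi : r ≤ (i : ℕ)) :
    |lam i| ≤ ∑ k, ∑ j, (A k j - M k j)^2 := by
  set hH := Matrix.isHermitian_mul_conjTranspose_self A with hHdef
  set eig := hH.eigenvalues with heig
  set v := hH.eigenvectorBasis with hv
  have hnn : 0 ≤ lam i := by
    rw [hσ]; exact (Matrix.posSemidef_self_mul_conjTranspose A).eigenvalues_nonneg _
  rw [abs_of_nonneg hnn]
  -- the constraint matrix
  set B : Matrix {j : Fin m // i < j} (Fin m) ℝ := Matrix.of (fun j k => v (σ j.1) k) with hB
  have hfr : Module.finrank ℝ (Fin m → ℝ) = m := by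
    simp [Module.finrank_fintype_fun_eq_card]
  have hSrank : Module.finrank ℝ (LinearMap.ker Mᴴ.mulVecLin) + r = m := by
    have h1 := LinearMap.finrank_range_add_finrank_ker (Mᴴ.mulVecLin)
    have h2 : Module.finrank ℝ (LinearMap.range Mᴴ.mulVecLin) = r := by
      rw [show Module.finrank ℝ (LinearMap.range Mᴴ.mulVecLin) = Mᴴ.rank from rfl,
        Matrix.rank_conjTranspose, hr]
    rw [h2, hfr] at h1
    omega
  have hcard : Fintype.card {j : Fin m // i < j} = m - 1 - (i : ℕ) := by
    have h1 : Fintype.card {j : Fin m // i < j} = (Finset.Ioi i).card := by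
      rw [Fintype.card_subtype]; congr 1; ext j; simp
    rw [h1, Fin.card_Ioi]
  have hTrank : (i : ℕ) + 1 ≤ Module.finrank ℝ (LinearMap.ker B.mulVecLin) := by
    have h1 := LinearMap.finrank_range_add_finrank_ker (B.mulVecLin)
    have h2 : Module.finrank ℝ (LinearMap.range B.mulVecLin)
        ≤ m - 1 - (i : ℕ) := by
      have h3 := Submodule.finrank_le (LinearMap.range B.mulVecLin)
      rwa [Module.finrank_fintype_fun_eq_card, hcard] at h3
    rw [hfr] at h1
    have him := i.isLt
    omega
  have hinf : 0 < Module.finrank ℝ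
      ↥(LinearMap.ker Mᴴ.mulVecLin ⊓ LinearMap.ker B.mulVecLin) := by
    have h1 := Submodule.finrank_sup_add_finrank_inf_eq
      (LinearMap.ker Mᴴ.mulVecLin) (LinearMap.ker B.mulVecLin)
    have h2 : Module.finrank ℝ ↥(LinearMap.ker Mᴴ.mulVecLin ⊔ LinearMap.ker B.mulVecLin) ≤ m :=
      le_trans (Submodule.finrank_le _) (le_of_eq hfr)
    omega
  obtain ⟨⟨x, hxST⟩, hx0'⟩ := Module.finrank_pos_iff_exists_ne_zero.mp hinf
  have hx0 : x ≠ 0 := fun h => hx0' (Subtype.ext h)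
  have hxS : Mᴴ *ᵥ x = 0 := hxST.1
  have hxT : B *ᵥ x = 0 := hxST.2
  -- analysis
  have hdot : ∀ a b : EuclideanSpace ℝ (Fin m), ⟪a, b⟫ = ⇑a ⬝ᵥ ⇑b := by
    intro a b; simp [PiLp.inner_apply, RCLike.inner_apply, dotProduct]
    exact Finset.sum_congr rfl fun _ _ => mul_comm _ _
  set c : Fin m → ℝ := fun k => ⇑(v k) ⬝ᵥ x with hc
  have horth : ∀ k l, ⇑(v k) ⬝ᵥ ⇑(v l) = if k = l then (1:ℝ) else 0 := by
    intro k l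
    rw [← hdot]
    exact orthonormal_iff_ite.mp v.orthonormal k l
  have hexp : ∑ k, c k • ⇑(v k) = x := by
    have h := v.sum_repr' (WithLp.toLp 2 x)
    calc ∑ k, c k • ⇑(v k) = ∑ k, ⟪v k, WithLp.toLp 2 x⟫ • ⇑(v k) := by
          refine Finset.sum_congr rfl fun k _ => ?_
          rw [hdot]
      _ = x := by simpa [WithLp.ofLp_sum] using congrArg (WithLp.ofLp (p := 2)) h
  have hvan : ∀ j, i < j → c (σ j) = 0 := by
    intro j hj
    have h := congrFun hxT ⟨j, hj⟩
    simpa [hB, mulVec, dotProduct, hc] using h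
  have hdsum : ∀ (y : Fin m → (Fin m → ℝ)), x ⬝ᵥ (∑ k, y k) = ∑ k, x ⬝ᵥ (y k) := by
    intro y
    simp only [dotProduct, Finset.sum_apply, Finset.mul_sum]
    exact Finset.sum_comm
  have hmul : (A * Aᴴ) *ᵥ x = ∑ k, (c k * eig k) • ⇑(v k) := by
    conv_lhs => rw [← hexp, ← mulVecLin_apply]
    rw [map_sum]
    refine Finset.sum_congr rfl fun k _ => ?_
    rw [LinearMap.map_smul, mulVecLin_apply, hH.mulVec_eigenvectorBasis k, smul_smul]
  have hquad : x ⬝ᵥ ((A * Aᴴ) *ᵥ x) = ∑ k, eig k * c k ^ 2 := by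
    rw [hmul, hdsum]
    refine Finset.sum_congr rfl fun k _ => ?_
    rw [dotProduct_smul, smul_eq_mul, dotProduct_comm]
    show c k * eig k * c k = eig k * c k ^ 2
    ring
  have hnormx : x ⬝ᵥ x = ∑ k, c k ^ 2 := by
    conv_lhs => rw [show x ⬝ᵥ x = x ⬝ᵥ (∑ k, c k • ⇑(v k)) by rw [hexp]]
    rw [hdsum]
    refine Finset.sum_congr rfl fun k _ => ?_
    rw [dotProduct_smul, smul_eq_mul, dotProduct_comm]
    show c k * c k = c k ^ 2
    ring
  have hlower : lam i * (x ⬝ᵥ x) ≤ x ⬝ᵥ ((A * Aᴴ) *ᵥ x) := by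
    rw [hquad, hnormx, Finset.mul_sum]
    rw [← Equiv.sum_comp σ (fun k => eig k * c k ^ 2),
      ← Equiv.sum_comp σ (fun k => lam i * c k ^ 2)]
    refine Finset.sum_le_sum fun j _ => ?_
    rcases le_or_gt j i with hj | hj
    · have h1 : lam i ≤ lam j := hmono hj
      have h2 : lam j = eig (σ j) := congrFun hσ j
      rw [← h2]
      exact mul_le_mul_of_nonneg_right h1 (sq_nonneg _)
    · rw [hvan j hj]; simp
  have hAT : Aᴴ *ᵥ x = (A - M)ᴴ *ᵥ x := by
    rw [Matrix.conjTranspose_sub, sub_mulVec, hxS, sub_zero]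
  have hupper : x ⬝ᵥ ((A * Aᴴ) *ᵥ x) ≤ (∑ k, ∑ j, (A k j - M k j)^2) * (x ⬝ᵥ x) := by
    have h1 : x ⬝ᵥ ((A * Aᴴ) *ᵥ x) = (Aᴴ *ᵥ x) ⬝ᵥ (Aᴴ *ᵥ x) := by
      rw [← mulVec_mulVec, dotProduct_mulVec]
      congr 1
      ext j
      simp [vecMul, mulVec, conjTranspose_apply, dotProduct, mul_comm]
    have hxx : x ⬝ᵥ x = ∑ k, x k ^ 2 := by simp [dotProduct, sq]
    rw [h1, hAT]
    have h2 : ((A - M)ᴴ *ᵥ x) ⬝ᵥ ((A - M)ᴴ *ᵥ x)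
        = ∑ jj : Fin q, (∑ k, (A k jj - M k jj) * x k)^2 := by
      simp [dotProduct, mulVec, conjTranspose_apply, dotProduct, sq, Matrix.sub_apply]
    rw [h2]
    calc ∑ jj : Fin q, (∑ k, (A k jj - M k jj) * x k)^2
        ≤ ∑ jj : Fin q, (∑ k, (A k jj - M k jj)^2) * (∑ k, x k ^ 2) := by
          refine Finset.sum_le_sum fun jj _ => ?_
          exact Finset.sum_mul_sq_le_sq_mul_sq Finset.univ _ _
      _ = (∑ k, ∑ j, (A k j - M k j)^2) * (x ⬝ᵥ x) := by
          rw [← Finset.sum_mul, hxx, Finset.sum_comm]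
  have hxpos : 0 < x ⬝ᵥ x := by
    rcases lt_or_eq_of_le (Finset.sum_nonneg fun k _ => mul_self_nonneg (x k) :
        (0:ℝ) ≤ x ⬝ᵥ x) with h | h
    · exact h
    · exact absurd (dotProduct_self_eq_zero.mp h.symm) hx0
  exact le_of_mul_le_mul_right (hlower.trans hupper) hxpos

/-- Robin–Smith fast rate: if `√n (M̂_n − M)` is bounded in probability entrywise and
`M` has rank `r`, then the eigenvalues of `M̂_n M̂_n'` beyond the `r`-th (in descending
order) are `O_P(1/n)`. -/
theorem stmt_14 {Ω : Type*} [MeasurableSpace Ω] (P : Measure Ω) [IsProbabilityMeasure P]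
    {m q : ℕ} (M : Matrix (Fin m) (Fin q) ℝ) (r : ℕ) (hr : M.rank = r)
    (Mh : ℕ → Ω → Matrix (Fin m) (Fin q) ℝ)
    (hbound : ∀ i j, ∀ ε > 0, ∃ C : ℝ, ∀ᶠ n : ℕ in atTop,
      P {ω | C ≤ Real.sqrt n * |Mh n ω i j - M i j|} ≤ ENNReal.ofReal ε)
    (lam : ℕ → Ω → Fin m → ℝ)
    (hlam : ∀ n ω, Antitone (lam n ω) ∧ ∃ σ : Equiv.Perm (Fin m),
      lam n ω = (Matrix.isHermitian_mul_conjTranspose_self (Mh n ω)).eigenvalues ∘ σ)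
    (i : Fin m) (hi : r ≤ (i : ℕ)) :
    ∀ ε > 0, ∃ C : ℝ, ∀ᶠ n : ℕ in atTop,
      P {ω | C ≤ (n : ℝ) * |lam n ω i|} ≤ ENNReal.ofReal ε := by
  intro ε hε
  set ε' : ℝ := ε / ((m * q : ℕ) + 1) with hε'
  have hε'pos : 0 < ε' := by positivity
  choose C hC using fun (p : Fin m × Fin q) => hbound p.1 p.2 ε' hε'pos
  set D : Fin m × Fin q → ℝ := fun p => max (C p) 1 with hD
  refine ⟨(∑ p : Fin m × Fin q, D p ^ 2) + 1, ?_⟩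
  have hall : ∀ᶠ n : ℕ in atTop, ∀ p : Fin m × Fin q,
      P {ω | C p ≤ Real.sqrt n * |Mh n ω p.1 p.2 - M p.1 p.2|} ≤ ENNReal.ofReal ε' :=
    eventually_all.mpr hC
  filter_upwards [hall] with n hn
  have hsub : {ω | (∑ p : Fin m × Fin q, D p ^ 2) + 1 ≤ (n:ℝ) * |lam n ω i|} ⊆
      ⋃ p : Fin m × Fin q, {ω | C p ≤ Real.sqrt n * |Mh n ω p.1 p.2 - M p.1 p.2|} := by
    intro ω hω
    simp only [Set.mem_setOf_eq] at hω
    by_contra hcon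
    simp only [Set.mem_iUnion, Set.mem_setOf_eq, not_exists, not_le] at hcon
    obtain ⟨hmono, σ, hσ⟩ := hlam n ω
    have hdet := eig_null_bound M (Mh n ω) hr (lam n ω) hmono σ hσ i hi
    have hn0 : (0:ℝ) ≤ (n:ℕ) := Nat.cast_nonneg n
    have key : (n:ℝ) * |lam n ω i|
        ≤ ∑ p : Fin m × Fin q, (Real.sqrt n * |Mh n ω p.1 p.2 - M p.1 p.2|)^2 := by
      calc (n:ℝ) * |lam n ω i|
          ≤ (n:ℝ) * ∑ k, ∑ j, (Mh n ω k j - M k j)^2 :=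
            mul_le_mul_of_nonneg_left hdet hn0
        _ = ∑ k, ∑ j, (n:ℝ) * (Mh n ω k j - M k j)^2 := by
            rw [Finset.mul_sum]; exact Finset.sum_congr rfl fun k _ => Finset.mul_sum _ _ _
        _ = ∑ p : Fin m × Fin q, (n:ℝ) * (Mh n ω p.1 p.2 - M p.1 p.2)^2 := by
            rw [← Finset.univ_product_univ, Finset.sum_product]
        _ = ∑ p : Fin m × Fin q, (Real.sqrt n * |Mh n ω p.1 p.2 - M p.1 p.2|)^2 := by
            refine Finset.sum_congr rfl fun p _ => ?_
            rw [mul_pow, sq_abs, Real.sq_sqrt hn0]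
    have hterm : ∀ p : Fin m × Fin q,
        (Real.sqrt n * |Mh n ω p.1 p.2 - M p.1 p.2|)^2 ≤ D p ^ 2 := by
      intro p
      have h1 : (0:ℝ) ≤ Real.sqrt n * |Mh n ω p.1 p.2 - M p.1 p.2| := by positivity
      have h2 : Real.sqrt n * |Mh n ω p.1 p.2 - M p.1 p.2| ≤ D p :=
        le_trans (le_of_lt (hcon p)) (le_max_left _ _)
      exact pow_le_pow_left₀ h1 h2 2
    have hlt : ∑ p : Fin m × Fin q, (Real.sqrt n * |Mh n ω p.1 p.2 - M p.1 p.2|)^2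
        < (∑ p : Fin m × Fin q, D p ^ 2) + 1 :=
      lt_of_le_of_lt (Finset.sum_le_sum fun p _ => hterm p) (lt_add_one _)
    linarith
  calc P {ω | (∑ p : Fin m × Fin q, D p ^ 2) + 1 ≤ (n:ℝ) * |lam n ω i|}
      ≤ P (⋃ p : Fin m × Fin q, {ω | C p ≤ Real.sqrt n * |Mh n ω p.1 p.2 - M p.1 p.2|}) :=
        measure_mono hsub
    _ ≤ ∑ p : Fin m × Fin q, P {ω | C p ≤ Real.sqrt n * |Mh n ω p.1 p.2 - M p.1 p.2|} :=
        measure_iUnion_fintype_le _ _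
    _ ≤ ∑ _p : Fin m × Fin q, ENNReal.ofReal ε' := Finset.sum_le_sum fun p _ => hn p
    _ = (Fintype.card (Fin m × Fin q) : ENNReal) * ENNReal.ofReal ε' := by
        rw [Finset.sum_const, Finset.card_univ, nsmul_eq_mul]
    _ ≤ ENNReal.ofReal ε := by
        rw [← ENNReal.ofReal_natCast, ← ENNReal.ofReal_mul (by positivity)]
        apply ENNReal.ofReal_le_ofReal
        have hcard : (Fintype.card (Fin m × Fin q) : ℝ) = ((m * q : ℕ) : ℝ) := by
          simp [Fintype.card_prod]
        rw [hcard, hε']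
        have hpos : (0:ℝ) < ((m * q : ℕ) : ℝ) + 1 := by positivity
        calc ((m * q : ℕ) : ℝ) * (ε / (((m * q : ℕ) : ℝ) + 1))
            ≤ (((m * q : ℕ) : ℝ) + 1) * (ε / (((m * q : ℕ) : ℝ) + 1)) := by
              apply mul_le_mul_of_nonneg_right (by linarith) (by positivity)
          _ = ε := by field_simp
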